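/- The function f(p) = -(1 - γp)·log(p) is strictly convex on the open interval (0,1) for every γ > 0. -/

import Mathlib

theorem convex_focal_loss_strictConvex (γ : ℝ) (hγ : 0 < γ) :
    StrictConvexOn ℝ (Set.Ioo (0:ℝ) 1) (fun p => -(1 - γ * p) * Real.log p) := by
  set f : ℝ → ℝ := fun p => -(1 - γ * p) * Real.log p with hf
  set g : ℝ → ℝ := fun p => γ * Real.log p + γ - 1 / p with hgdef
  have hderiv : ∀ x ∈ Set.Ioi (0:ℝ), HasDerivAt f (g x) x := by
    intro x hx
    have hx0 : x ≠ 0 := ne_of_gt hx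
    have h1 : HasDerivAt (fun p : ℝ => -(1 - γ * p)) γ x := by
      have : HasDerivAt (fun p : ℝ => γ * p - 1) γ x := by
        simpa using ((hasDerivAt_id x).const_mul γ).sub_const 1
      simpa [sub_eq_add_neg, neg_sub] using this
    have h2 : HasDerivAt Real.log (1 / x) x := by
      simpa [one_div] using Real.hasDerivAt_log hx0
    have := h1.mul h2
    refine this.congr_deriv ?_
    simp only [hgdef]
    field_simp
    ring
  have hEq : Set.EqOn (deriv f) g (Set.Ioi (0:ℝ)) := fun x hx => (hderiv x hx).deriv
  have hderiv2 : ∀ x ∈ Set.Ioi (0:ℝ), HasDerivAt g (γ / x + 1 / x ^ 2) x := by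
    intro x hx
    have hx0 : x ≠ 0 := ne_of_gt hx
    have h1 : HasDerivAt (fun p : ℝ => γ * Real.log p) (γ * (1 / x)) x :=
      (Real.hasDerivAt_log hx0).const_mul γ |>.congr_deriv (by rw [one_div])
    have h2 : HasDerivAt (fun p : ℝ => 1 / p) (-(1 / x ^ 2)) x := by
      simpa using (hasDerivAt_inv hx0)
    have := (h1.add_const γ).sub h2
    refine this.congr_deriv ?_
    field_simp
    ring
  apply strictConvexOn_of_deriv2_pos (convex_Ioo 0 1)
  · apply ContinuousOn.mul
    · fun_prop
    · exact Real.continuousOn_log.mono (fun x hx => ne_of_gt hx.1)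
  · intro x hx
    rw [interior_Ioo] at hx
    have hx0 : 0 < x := hx.1
    have hmem : Set.Ioi (0:ℝ) ∈ nhds x := Ioi_mem_nhds hx0
    have key : deriv (deriv f) x = γ / x + 1 / x ^ 2 := by
      have : deriv f =ᶠ[nhds x] g := Filter.eventuallyEq_of_mem hmem hEq
      rw [this.deriv_eq]
      exact (hderiv2 x hx0).deriv
    have : deriv^[2] f x = deriv (deriv f) x := by
      simp [Function.iterate_succ, Function.iterate_zero]
    rw [this, key]
    positivity
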